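/- Let Ω = {(x,1): x∈[0,1]} ∪ {(1,y): y∈[0,1]} and let ⟨f,g⟩ = ∫₀¹ f(x,1)g(x,1)w₁(x)dx + ∫₀¹ f(1,y)g(1,y)w₂(y)dy. Then the space of polynomials of degree n orthogonal (with respect to this form) to all polynomials of lower degree, in the quotient ring ℝ[x,y]/⟨(1-x)(1-y)⟩, has dimension 1 for n=0 and dimension 2 for each n ≥ 1. -/

import Mathlib

open MeasureTheory MvPolynomial

noncomputable section

/-- The polynomial ring `ℝ[x,y]`. -/
abbrev R2 := MvPolynomial (Fin 2) ℝ

/-- The ideal generated by `(1-x)(1-y)`. -/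
def wedgeIdeal : Ideal R2 := Ideal.span {(1 - X 0) * (1 - X 1)}

/-- Evaluation of a bivariate polynomial. -/
def ev (p : R2) (a b : ℝ) : ℝ := eval ![a, b] p

/-- The wedge bilinear form `⟨f,g⟩ = ∫₀¹ f(x,1)g(x,1)w₁(x)dx + ∫₀¹ f(1,y)g(1,y)w₂(y)dy`. -/
def wedgeForm (w1 w2 : ℝ → ℝ) (f g : R2) : ℝ :=
  (∫ x in (0:ℝ)..1, ev f x 1 * ev g x 1 * w1 x) +
  (∫ y in (0:ℝ)..1, ev f 1 y * ev g 1 y * w2 y)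

/-- The set of orthogonal polynomials of degree `n` in the quotient `ℝ[x,y]/⟨(1-x)(1-y)⟩`:
elements represented by a polynomial of degree at most `n` orthogonal to every polynomial
of degree less than `n`. -/
def wedgeOP (w1 w2 : ℝ → ℝ) (n : ℕ) : Set (R2 ⧸ wedgeIdeal) :=
  {q | ∃ p : R2, Ideal.Quotient.mk wedgeIdeal p = q ∧ p.totalDegree ≤ n ∧
        ∀ r : R2, r.totalDegree < n → wedgeForm w1 w2 p r = 0}

/-! ### Auxiliary univariate theory -/

namespace WedgeAux
open Polynomial

variable (w : ℝ → ℝ)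

lemma integ (hi : IntervalIntegrable w volume 0 1) (F : Polynomial ℝ) :
    IntervalIntegrable (fun x => F.eval x * w x) volume 0 1 :=
  hi.continuousOn_mul F.continuous.continuousOn

variable (hi : IntervalIntegrable w volume 0 1)

/-- The moment functional as a linear map. -/
def J : Polynomial ℝ →ₗ[ℝ] ℝ where
  toFun F := ∫ x in (0:ℝ)..1, F.eval x * w x
  map_add' F G := by
    simp only [Polynomial.eval_add, add_mul]
    exact intervalIntegral.integral_add (integ w hi F) (integ w hi G)
  map_smul' c F := by
    simp only [Polynomial.eval_smul, smul_eq_mul, mul_assoc, RingHom.id_apply]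
    exact intervalIntegral.integral_const_mul c _

lemma J_apply (F : Polynomial ℝ) : J w hi F = ∫ x in (0:ℝ)..1, F.eval x * w x := rfl

/-- Positive definiteness. -/
lemma posdef (hw : ∀ x ∈ Set.Icc (0:ℝ) 1, 0 ≤ w x)
    (hp : 0 < ∫ x in (0:ℝ)..1, w x) (R : Polynomial ℝ)
    (h0 : J w hi ((Polynomial.X - Polynomial.C 1) * (R * R)) = 0) : R = 0 := by
  by_contra hR
  set g : ℝ → ℝ :=
    fun x => ((Polynomial.X - Polynomial.C 1) * (R * R) : Polynomial ℝ).eval x * w x with hg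
  have hgeval : ∀ x, g x = (x - 1) * (R.eval x)^2 * w x := by
    intro x
    simp only [hg, Polynomial.eval_mul, Polynomial.eval_sub, Polynomial.eval_X,
      Polynomial.eval_C]
    ring
  have hgint : IntervalIntegrable g volume 0 1 := integ w hi _
  have hgle : ∀ x ∈ Set.Ioc (0:ℝ) 1, 0 ≤ -g x := by
    intro x hx
    have h1 : x - 1 ≤ 0 := by linarith [hx.2]
    have h2 : 0 ≤ w x := hw x ⟨le_of_lt hx.1, hx.2⟩
    rw [hgeval, neg_nonneg]
    exact mul_nonpos_of_nonpos_of_nonneg (mul_nonpos_of_nonpos_of_nonneg h1 (sq_nonneg _)) h2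
  have h0' : ∫ x in Set.Ioc (0:ℝ) 1, -g x = 0 := by
    rw [MeasureTheory.integral_neg, neg_eq_zero,
      ← intervalIntegral.integral_of_le (by norm_num : (0:ℝ) ≤ 1)]
    exact h0
  have hint : IntegrableOn (fun x => -g x) (Set.Ioc (0:ℝ) 1) volume :=
    ((intervalIntegrable_iff_integrableOn_Ioc_of_le (by norm_num)).mp hgint).neg
  have hae : (fun x => -g x) =ᵐ[volume.restrict (Set.Ioc (0:ℝ) 1)] 0 := by
    rw [← MeasureTheory.integral_eq_zero_iff_of_nonneg_ae ?_ hint]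
    · exact h0'
    · refine (MeasureTheory.ae_restrict_iff' measurableSet_Ioc).mpr ?_
      exact Filter.Eventually.of_forall hgle
  have hroots : volume ({x : ℝ | R.IsRoot x} ∪ {1}) = 0 :=
    measure_union_null ((Polynomial.finite_setOf_isRoot hR).measure_zero _)
      (measure_singleton 1)
  have hZ : ∀ᵐ x ∂(volume.restrict (Set.Ioc (0:ℝ) 1)),
      x ∉ ({x : ℝ | R.IsRoot x} ∪ {1}) :=
    ae_restrict_of_ae (measure_eq_zero_iff_ae_notMem.mp hroots)
  have hw0 : w =ᵐ[volume.restrict (Set.Ioc (0:ℝ) 1)] 0 := by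
    filter_upwards [hae, hZ] with x h1 h2
    simp only [Set.mem_union, Set.mem_setOf_eq, Set.mem_singleton_iff, not_or] at h2
    have hx1 : x - 1 ≠ 0 := sub_ne_zero.mpr h2.2
    have hxr : (R.eval x)^2 ≠ 0 := pow_ne_zero _ h2.1
    have hgx : (x - 1) * (R.eval x)^2 * w x = 0 := by
      rw [← hgeval]; simpa [neg_eq_zero] using h1
    rcases mul_eq_zero.mp hgx with h | h
    · exact absurd h (mul_ne_zero hx1 hxr)
    · exact h
  have hzero : ∫ x in Set.Ioc (0:ℝ) 1, w x = 0 := by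
    rw [MeasureTheory.integral_congr_ae hw0]; simp
  rw [intervalIntegral.integral_of_le (by norm_num : (0:ℝ) ≤ 1)] at hp
  exact absurd hzero (ne_of_gt hp)

lemma J_mul_eval (n : ℕ) (P A : Polynomial ℝ)
    (hP : ∀ i, 1 ≤ i → i < n → J w hi (P * (Polynomial.X^i - 1)) = 0)
    (hA : A.natDegree < n) :
    J w hi (P * A) = A.eval 1 * J w hi P := by
  have key : ∀ i < n, J w hi (P * Polynomial.X^i) = J w hi P := by
    intro i hin
    rcases Nat.eq_zero_or_pos i with rfl | h
    · simp
    · have h2 := hP i h hin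
      have h3 : J w hi (P * Polynomial.X ^ i) - J w hi P
          = J w hi (P * (Polynomial.X^i - 1)) := by
        rw [← map_sub, mul_sub, mul_one]
      rw [h2] at h3
      linarith
  conv_lhs => rw [A.as_sum_range' n hA]
  rw [Finset.mul_sum, map_sum]
  have hterm : ∀ i ∈ Finset.range n,
      J w hi (P * Polynomial.monomial i (A.coeff i)) = A.coeff i * J w hi P := by
    intro i hi'
    rw [← Polynomial.C_mul_X_pow_eq_monomial, show P * (Polynomial.C (A.coeff i)
        * Polynomial.X ^ i) = A.coeff i • (P * Polynomial.X^i) by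
      rw [Polynomial.smul_eq_C_mul]; ring, _root_.map_smul,
      key i (Finset.mem_range.mp hi')]
    rfl
  rw [Finset.sum_congr rfl hterm, ← Finset.sum_mul, Polynomial.eval_eq_sum_range' hA]
  simp

lemma inj_core (hw : ∀ x ∈ Set.Icc (0:ℝ) 1, 0 ≤ w x)
    (hp : 0 < ∫ x in (0:ℝ)..1, w x) (n : ℕ)
    (P : Polynomial ℝ) (hdeg : P.degree < ((n+1 : ℕ) : WithBot ℕ))
    (horth : ∀ i, 1 ≤ i → i < n → J w hi (P * (Polynomial.X^i - 1)) = 0)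
    (he : P.eval 1 = 0) (hJ : J w hi P = 0) : P = 0 := by
  by_contra hP0
  obtain ⟨R, hR⟩ := Polynomial.dvd_iff_isRoot.mpr he
  have hRne : R ≠ 0 := fun h => hP0 (by simp [hR, h])
  have hdR : R.natDegree < n := by
    have h1 : P.natDegree = 1 + R.natDegree := by
      rw [hR, Polynomial.natDegree_mul (Polynomial.X_sub_C_ne_zero 1) hRne,
        Polynomial.natDegree_X_sub_C]
    have h2 : P.natDegree < n + 1 := (Polynomial.natDegree_lt_iff_degree_lt hP0).mpr hdeg
    omega
  have h3 : J w hi (P * R) = R.eval 1 * J w hi P := J_mul_eval w hi n P R horth hdR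
  rw [hJ, mul_zero] at h3
  have h4 : J w hi ((Polynomial.X - Polynomial.C 1) * (R * R)) = 0 := by
    rw [← mul_assoc, ← hR]; exact h3
  exact hRne (posdef w hi hw hp R h4)

/-- The data map. -/
def Tmap (n : ℕ) : Polynomial.degreeLT ℝ (n+1) →ₗ[ℝ] (Fin (n+1) → ℝ) :=
  LinearMap.pi fun j =>
    (if (j:ℕ)+1 < n then (J w hi).comp (LinearMap.mulRight ℝ (Polynomial.X^((j:ℕ)+1) - 1))
     else if (j:ℕ)+1 = n then Polynomial.leval 1
     else J w hi).comp (Submodule.subtype _)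

lemma Tmap_apply (n : ℕ) (P : Polynomial.degreeLT ℝ (n+1)) (j : Fin (n+1)) :
    Tmap w hi n P j
      = if (j:ℕ)+1 < n then J w hi ((P:Polynomial ℝ) * (Polynomial.X^((j:ℕ)+1) - 1))
        else if (j:ℕ)+1 = n then (P:Polynomial ℝ).eval 1 else J w hi (P:Polynomial ℝ) := by
  simp only [Tmap, LinearMap.pi_apply, LinearMap.comp_apply, Submodule.coe_subtype]
  split_ifs with h1 h2
  · simp [LinearMap.comp_apply, LinearMap.mulRight_apply]
  · simp [Polynomial.leval_apply]
  · rfl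

lemma Tmap_injective (hw : ∀ x ∈ Set.Icc (0:ℝ) 1, 0 ≤ w x)
    (hp : 0 < ∫ x in (0:ℝ)..1, w x) (n : ℕ) (hn : 1 ≤ n) :
    Function.Injective (Tmap w hi n) := by
  rw [← LinearMap.ker_eq_bot, Submodule.eq_bot_iff]
  rintro ⟨P, hP⟩ hker
  rw [LinearMap.mem_ker] at hker
  have hcomp : ∀ j : Fin (n+1), Tmap w hi n ⟨P, hP⟩ j = 0 := fun j => by rw [hker]; rfl
  have horth : ∀ i, 1 ≤ i → i < n → J w hi (P * (Polynomial.X^i - 1)) = 0 := by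
    intro i h1 h2
    have := hcomp ⟨i-1, by omega⟩
    rw [Tmap_apply] at this
    simp only [show (i:ℕ) - 1 + 1 = i from by omega] at this
    rwa [if_pos h2] at this
  have he : P.eval 1 = 0 := by
    have := hcomp ⟨n-1, by omega⟩
    rw [Tmap_apply] at this
    simpa [show n - 1 + 1 = n from by omega] using this
  have hJ : J w hi P = 0 := by
    have := hcomp ⟨n, by omega⟩
    rw [Tmap_apply] at this
    simpa [Fin.val_mk, show ¬(n+1 < n) from by omega, show n+1 ≠ n from by omega] using this
  have : P = 0 := inj_core w hi hw hp n P (Polynomial.mem_degreeLT.mp hP) horth he hJ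
  exact Subtype.ext this

lemma exists_orth (hw : ∀ x ∈ Set.Icc (0:ℝ) 1, 0 ≤ w x)
    (hp : 0 < ∫ x in (0:ℝ)..1, w x) (n : ℕ) (hn : 1 ≤ n) (s t : ℝ) :
    ∃ P : Polynomial ℝ, P.degree < ((n+1 : ℕ) : WithBot ℕ) ∧
      (∀ i, 1 ≤ i → i < n → J w hi (P * (Polynomial.X^i - 1)) = 0) ∧
      P.eval 1 = s ∧ J w hi P = t := by
  have hinj := Tmap_injective w hi hw hp n hn
  set e := Polynomial.degreeLTEquiv ℝ (n+1) with he
  have hsurj : Function.Surjective (Tmap w hi n) := by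
    have h1 : Function.Injective ((Tmap w hi n).comp (e.symm : (Fin (n+1) → ℝ) →ₗ[ℝ] _)) :=
      hinj.comp e.symm.injective
    have h2 : Function.Surjective ((Tmap w hi n).comp (e.symm : (Fin (n+1) → ℝ) →ₗ[ℝ] _)) :=
      (LinearMap.injective_iff_surjective).mp h1
    intro v
    obtain ⟨x, hx⟩ := h2 v
    exact ⟨_, hx⟩
  obtain ⟨⟨P, hPmem⟩, hPval⟩ := hsurj
    (fun j => if (j:ℕ)+1 < n then 0 else if (j:ℕ)+1 = n then s else t)
  have hcomp : ∀ j : Fin (n+1), Tmap w hi n ⟨P, hPmem⟩ j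
      = if (j:ℕ)+1 < n then 0 else if (j:ℕ)+1 = n then s else t := fun j => by rw [hPval]
  refine ⟨P, Polynomial.mem_degreeLT.mp hPmem, ?_, ?_, ?_⟩
  · intro i h1 h2
    have := hcomp ⟨i-1, by omega⟩
    rw [Tmap_apply] at this
    simp only [show (i:ℕ) - 1 + 1 = i from by omega] at this
    rwa [if_pos h2, if_pos h2] at this
  · have := hcomp ⟨n-1, by omega⟩
    rw [Tmap_apply] at this
    simpa [show n - 1 + 1 = n from by omega] using this
  · have := hcomp ⟨n, by omega⟩
    rw [Tmap_apply] at this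
    simpa [Fin.val_mk, show ¬(n+1 < n) from by omega, show n+1 ≠ n from by omega] using this

lemma orth_unique (hw : ∀ x ∈ Set.Icc (0:ℝ) 1, 0 ≤ w x)
    (hp : 0 < ∫ x in (0:ℝ)..1, w x) (n : ℕ) {P P' : Polynomial ℝ}
    (hd : P.degree < ((n+1 : ℕ) : WithBot ℕ)) (hd' : P'.degree < ((n+1 : ℕ) : WithBot ℕ))
    (ho : ∀ i, 1 ≤ i → i < n → J w hi (P * (Polynomial.X^i - 1)) = 0)
    (ho' : ∀ i, 1 ≤ i → i < n → J w hi (P' * (Polynomial.X^i - 1)) = 0)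
    (he : P.eval 1 = P'.eval 1) (hJ : J w hi P = J w hi P') : P = P' := by
  have h0 : P - P' = 0 := by
    refine inj_core w hi hw hp n (P - P')
      ((Polynomial.degree_sub_le P P').trans_lt (max_lt hd hd'))
      ?_ (by simp [Polynomial.eval_sub, he]) (by rw [map_sub, hJ, sub_self])
    intro i h1 h2
    rw [sub_mul, map_sub, ho i h1 h2, ho' i h1 h2, sub_self]
  exact sub_eq_zero.mp h0

end WedgeAux

/-! ### Bivariate bookkeeping -/

namespace WedgeBi

/-- restriction to the edge y = 1 -/
def res1 : R2 →ₐ[ℝ] Polynomial ℝ := aeval ![Polynomial.X, 1]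
/-- restriction to the edge x = 1 -/
def res2 : R2 →ₐ[ℝ] Polynomial ℝ := aeval ![1, Polynomial.X]

lemma aeval_eq_eval' (v : Fin 2 → ℝ) (p : R2) : aeval v p = MvPolynomial.eval v p := by
  rw [← MvPolynomial.coe_aeval_eq_eval]; rfl

lemma paeval_eq_eval (x : ℝ) (q : Polynomial ℝ) : Polynomial.aeval x q = q.eval x := by
  rw [← Polynomial.coe_aeval_eq_eval]

lemma res1_eval (p : R2) (x : ℝ) : (res1 p).eval x = MvPolynomial.eval ![x, 1] p := by
  have h : (Polynomial.aeval x).comp res1 = MvPolynomial.aeval ![x, (1:ℝ)] := by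
    apply MvPolynomial.algHom_ext
    intro i
    fin_cases i <;> simp [res1]
  have h2 := DFunLike.congr_fun h p
  simp only [AlgHom.comp_apply] at h2
  rw [← aeval_eq_eval', ← h2, paeval_eq_eval]

lemma res2_eval (p : R2) (y : ℝ) : (res2 p).eval y = MvPolynomial.eval ![1, y] p := by
  have h : (Polynomial.aeval y).comp res2 = MvPolynomial.aeval ![(1:ℝ), y] := by
    apply MvPolynomial.algHom_ext
    intro i
    fin_cases i <;> simp [res2]
  have h2 := DFunLike.congr_fun h p
  simp only [AlgHom.comp_apply] at h2
  rw [← aeval_eq_eval', ← h2, paeval_eq_eval]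

lemma natDegree_res1_le (p : R2) : (res1 p).natDegree ≤ p.totalDegree := by
  conv_lhs => rw [p.as_sum, map_sum]
  apply Polynomial.natDegree_sum_le_of_forall_le
  intro s hs
  rw [res1, aeval_monomial]
  refine (Polynomial.natDegree_mul_le).trans ?_
  have h1 : (algebraMap ℝ (Polynomial ℝ) (coeff s p)).natDegree = 0 := Polynomial.natDegree_C _
  rw [h1, zero_add]
  refine (Polynomial.natDegree_prod_le _ _).trans ?_
  have h2 : ∀ i ∈ s.support, ((![Polynomial.X, (1:Polynomial ℝ)] i) ^ (s i)).natDegree ≤ s i := by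
    intro i _
    fin_cases i
    · simp [Polynomial.natDegree_X_pow]
    · simp
  calc ∑ i ∈ s.support, ((![Polynomial.X, (1:Polynomial ℝ)] i) ^ (s i)).natDegree
      ≤ ∑ i ∈ s.support, s i := Finset.sum_le_sum h2
    _ ≤ p.totalDegree := MvPolynomial.le_totalDegree hs

lemma natDegree_res2_le (p : R2) : (res2 p).natDegree ≤ p.totalDegree := by
  conv_lhs => rw [p.as_sum, map_sum]
  apply Polynomial.natDegree_sum_le_of_forall_le
  intro s hs
  rw [res2, aeval_monomial]
  refine (Polynomial.natDegree_mul_le).trans ?_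
  have h1 : (algebraMap ℝ (Polynomial ℝ) (coeff s p)).natDegree = 0 := Polynomial.natDegree_C _
  rw [h1, zero_add]
  refine (Polynomial.natDegree_prod_le _ _).trans ?_
  have h2 : ∀ i ∈ s.support, ((![(1:Polynomial ℝ), Polynomial.X] i) ^ (s i)).natDegree ≤ s i := by
    intro i _
    fin_cases i
    · simp
    · simp [Polynomial.natDegree_X_pow]
  calc ∑ i ∈ s.support, ((![(1:Polynomial ℝ), Polynomial.X] i) ^ (s i)).natDegree
      ≤ ∑ i ∈ s.support, s i := Finset.sum_le_sum h2
    _ ≤ p.totalDegree := MvPolynomial.le_totalDegree hs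

/-- embedding of a univariate polynomial via the variable X i -/
def emb (i : Fin 2) : Polynomial ℝ →ₐ[ℝ] R2 := Polynomial.aeval (X i)

lemma totalDegree_emb_le (i : Fin 2) (F : Polynomial ℝ) :
    (emb i F).totalDegree ≤ F.natDegree := by
  nth_rewrite 1 [F.as_sum_range' (F.natDegree + 1) (Nat.lt_succ_self _)]
  rw [map_sum]
  refine (MvPolynomial.totalDegree_finset_sum _ _).trans ?_
  apply Finset.sup_le
  intro k hk
  rw [emb, Polynomial.aeval_monomial]
  refine (MvPolynomial.totalDegree_mul _ _).trans ?_
  have h1 : (algebraMap ℝ R2 (F.coeff k)).totalDegree = 0 := totalDegree_C _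
  have h2 : ((X i : R2) ^ k).totalDegree ≤ k := by
    refine (MvPolynomial.totalDegree_pow _ _).trans ?_
    simp [totalDegree_X]
  rw [h1, zero_add]
  exact h2.trans (Nat.le_of_lt_succ (Finset.mem_range.mp hk))

namespace K

open Polynomial in
lemma eta_inj : Function.Injective (MvPolynomial.aeval (R := ℝ) ![Polynomial.X] :
    MvPolynomial (Fin 1) ℝ →ₐ[ℝ] Polynomial ℝ) := by
  have h : (Polynomial.aeval (MvPolynomial.X 0 : MvPolynomial (Fin 1) ℝ)).comp
      (MvPolynomial.aeval (R := ℝ) ![Polynomial.X]) = AlgHom.id ℝ _ := by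
    apply MvPolynomial.algHom_ext
    intro i
    fin_cases i
    simp
  intro a b hab
  have ha := DFunLike.congr_fun h a
  have hb := DFunLike.congr_fun h b
  simp only [AlgHom.comp_apply, AlgHom.id_apply] at ha hb
  rw [← ha, ← hb, hab]

lemma chi_eq : ∀ f : R2,
    (MvPolynomial.aeval (R := ℝ) ![Polynomial.X])
      (Polynomial.eval (1 : MvPolynomial (Fin 1) ℝ) (MvPolynomial.finSuccEquiv ℝ 1 f))
    = res2 f := by
  have h : ((MvPolynomial.aeval (R := ℝ) ![Polynomial.X]).toRingHom.comp
      ((Polynomial.evalRingHom (1 : MvPolynomial (Fin 1) ℝ)).comp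
        (MvPolynomial.finSuccEquiv ℝ 1 : R2 →+* Polynomial (MvPolynomial (Fin 1) ℝ))))
      = (res2 : R2 →ₐ[ℝ] Polynomial ℝ).toRingHom := by
    apply MvPolynomial.ringHom_ext
    · intro r
      have hc : MvPolynomial.finSuccEquiv ℝ 1 (C r) = Polynomial.C (C r) := by
        simp only [MvPolynomial.finSuccEquiv_apply, MvPolynomial.eval₂Hom_C]
        rfl
      simp [res2, hc]
    · intro i
      induction i using Fin.cases with
      | zero => simp [res2, MvPolynomial.finSuccEquiv_X_zero]
      | succ j =>
        simp [res2, MvPolynomial.finSuccEquiv_X_succ]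
  intro f
  exact DFunLike.congr_fun h f

lemma dvd_of_res2_eq_zero (f : R2) (h : res2 f = 0) : (X 0 - 1 : R2) ∣ f := by
  have h1 : Polynomial.eval (1 : MvPolynomial (Fin 1) ℝ)
      (MvPolynomial.finSuccEquiv ℝ 1 f) = 0 := by
    apply eta_inj
    rw [chi_eq f, h, map_zero]
  obtain ⟨G, hG⟩ := Polynomial.dvd_iff_isRoot.mpr h1
  refine ⟨(MvPolynomial.finSuccEquiv ℝ 1).symm G, ?_⟩
  apply (MvPolynomial.finSuccEquiv ℝ 1).injective
  rw [map_mul, hG]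
  congr 1
  · rw [map_sub, MvPolynomial.finSuccEquiv_X_zero, map_one]
    simp
  · simp

lemma dvd_of_res1_eq_zero (g : R2) (h : res1 g = 0) : (X 1 - 1 : R2) ∣ g := by
  set σ : Fin 2 ≃ Fin 2 := Equiv.swap 0 1 with hσ
  have hres : res2 (rename σ g) = 0 := by
    have h2 : res2 (rename (⇑σ) g) = aeval (![1, Polynomial.X] ∘ ⇑σ) g :=
      MvPolynomial.aeval_rename _ _ _
    have h3 : (![(1 : Polynomial ℝ), Polynomial.X] ∘ ⇑σ) = ![Polynomial.X, 1] := by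
      funext i
      fin_cases i <;> simp [hσ]
    rw [h2, h3]
    exact h
  obtain ⟨h1, hh⟩ := dvd_of_res2_eq_zero (rename σ g) hres
  refine ⟨rename σ h1, ?_⟩
  have hinv : rename (⇑σ) (rename (⇑σ) g) = g := by
    rw [MvPolynomial.rename_rename]
    have : (⇑σ ∘ ⇑σ) = id := by funext i; simp [hσ]
    rw [this, MvPolynomial.rename_id, AlgHom.id_apply]
  rw [← hinv, hh, map_mul, map_sub, MvPolynomial.rename_X, map_one]
  simp [hσ]

end K

lemma mem_wedgeIdeal_iff (f : R2) :
    f ∈ wedgeIdeal ↔ res1 f = 0 ∧ res2 f = 0 := by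
  constructor
  · intro hf
    obtain ⟨c, hc⟩ := (Ideal.mem_span_singleton).mp hf
    subst hc
    constructor <;>
    · simp only [map_mul, map_sub, map_one]
      simp [res1, res2]
  · rintro ⟨h1, h2⟩
    obtain ⟨g, hg⟩ := K.dvd_of_res2_eq_zero f h2
    have hres1g : res1 g = 0 := by
      have hmul : res1 f = res1 (X 0 - 1) * res1 g := by rw [hg, map_mul]
      rw [h1] at hmul
      have hX : res1 (X 0 - 1 : R2) = Polynomial.X - Polynomial.C 1 := by
        simp [res1]
      rw [hX] at hmul
      rcases mul_eq_zero.mp hmul.symm with h | h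
      · exact absurd h (Polynomial.X_sub_C_ne_zero 1)
      · exact h
    obtain ⟨h', hh'⟩ := K.dvd_of_res1_eq_zero g hres1g
    rw [wedgeIdeal, Ideal.mem_span_singleton, hg, hh']
    exact ⟨h', by ring⟩

end WedgeBi


/-! ### Glue lemmas -/

namespace WedgeBi

lemma natdeg_le {P : Polynomial ℝ} {n : ℕ} (h : P.degree < ((n+1 : ℕ) : WithBot ℕ)) :
    P.natDegree ≤ n := by
  rcases eq_or_ne P 0 with rfl | h0
  · simp
  · have := (Polynomial.natDegree_lt_iff_degree_lt h0).mpr h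
    omega

lemma deg_lt {P : Polynomial ℝ} {n : ℕ} (h : P.natDegree ≤ n) :
    P.degree < ((n+1 : ℕ) : WithBot ℕ) := by
  have h1 : P.degree ≤ (n : WithBot ℕ) :=
    Polynomial.degree_le_natDegree.trans (by exact_mod_cast h)
  exact lt_of_le_of_lt h1 (by exact_mod_cast Nat.lt_succ_self n)

lemma res1_emb0 (F : Polynomial ℝ) : res1 (emb 0 F) = F := by
  have h : res1.comp (emb 0) = AlgHom.id ℝ _ := by
    apply Polynomial.algHom_ext
    simp [res1, emb]
  exact DFunLike.congr_fun h F

lemma res2_emb1 (G : Polynomial ℝ) : res2 (emb 1 G) = G := by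
  have h : res2.comp (emb 1) = AlgHom.id ℝ _ := by
    apply Polynomial.algHom_ext
    simp [res2, emb]
  exact DFunLike.congr_fun h G

lemma res2_emb0 (F : Polynomial ℝ) : res2 (emb 0 F) = Polynomial.C (F.eval 1) := by
  have h : res2.comp (emb 0)
      = (Algebra.ofId ℝ (Polynomial ℝ)).comp (Polynomial.aeval (1:ℝ)) := by
    apply Polynomial.algHom_ext
    simp [res2, emb, Algebra.ofId_apply]
  have h2 := DFunLike.congr_fun h F
  simp only [AlgHom.comp_apply] at h2
  rw [h2, paeval_eq_eval]
  simp [Algebra.ofId_apply, Polynomial.algebraMap_eq]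

lemma res1_emb1 (G : Polynomial ℝ) : res1 (emb 1 G) = Polynomial.C (G.eval 1) := by
  have h : res1.comp (emb 1)
      = (Algebra.ofId ℝ (Polynomial ℝ)).comp (Polynomial.aeval (1:ℝ)) := by
    apply Polynomial.algHom_ext
    simp [res1, emb, Algebra.ofId_apply]
  have h2 := DFunLike.congr_fun h G
  simp only [AlgHom.comp_apply] at h2
  rw [h2, paeval_eq_eval]
  simp [Algebra.ofId_apply, Polynomial.algebraMap_eq]

lemma mk_smul (a : ℝ) (p : R2) :
    Ideal.Quotient.mk wedgeIdeal (a • p) = a • Ideal.Quotient.mk wedgeIdeal p := by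
  rw [← Ideal.Quotient.mkₐ_eq_mk ℝ wedgeIdeal]
  exact map_smul _ a p

lemma eq_C_zero (p : R2) (h : p.totalDegree = 0) : p = C (coeff 0 p) := by
  rw [MvPolynomial.totalDegree_eq_zero_iff] at h
  ext m
  rcases eq_or_ne m 0 with rfl | hm
  · simp
  · have hns : m ∉ p.support := by
      intro hmem
      apply hm
      ext x
      exact h m hmem x
    rw [MvPolynomial.notMem_support_iff] at hns
    rw [hns, MvPolynomial.coeff_C, if_neg (Ne.symm hm)]

lemma wedgeForm_eq (w1 w2 : ℝ → ℝ) (hi1 : IntervalIntegrable w1 volume 0 1)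
    (hi2 : IntervalIntegrable w2 volume 0 1) (f g : R2) :
    wedgeForm w1 w2 f g = WedgeAux.J w1 hi1 (res1 f * res1 g)
      + WedgeAux.J w2 hi2 (res2 f * res2 g) := by
  unfold wedgeForm
  rw [WedgeAux.J_apply, WedgeAux.J_apply]
  congr 1
  · apply intervalIntegral.integral_congr
    intro x _
    simp [ev, Polynomial.eval_mul, res1_eval]
  · apply intervalIntegral.integral_congr
    intro y _
    simp [ev, Polynomial.eval_mul, res2_eval]

end WedgeBi


/-- The space of orthogonal polynomials of degree `n` on the wedge has dimension `1` for
`n = 0` and dimension `2` for every `n ≥ 1`. -/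
theorem wedge_orthogonal_dimension (w1 w2 : ℝ → ℝ)
    (hw1 : ∀ x ∈ Set.Icc (0:ℝ) 1, 0 ≤ w1 x) (hw2 : ∀ x ∈ Set.Icc (0:ℝ) 1, 0 ≤ w2 x)
    (hi1 : IntervalIntegrable w1 volume 0 1) (hi2 : IntervalIntegrable w2 volume 0 1)
    (hp1 : 0 < ∫ x in (0:ℝ)..1, w1 x) (hp2 : 0 < ∫ x in (0:ℝ)..1, w2 x) :
    (∃ u : R2 ⧸ wedgeIdeal, u ≠ 0 ∧ wedgeOP w1 w2 0 = {q | ∃ a : ℝ, q = a • u}) ∧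
    ∀ n : ℕ, 1 ≤ n → ∃ u v : R2 ⧸ wedgeIdeal,
      LinearIndependent ℝ ![u, v] ∧
      wedgeOP w1 w2 n = {q | ∃ a b : ℝ, q = a • u + b • v} := by
  constructor
  · -- degree 0
    refine ⟨Ideal.Quotient.mk wedgeIdeal 1, ?_, ?_⟩
    · intro h0
      have h1 : (1 : R2) ∈ wedgeIdeal := by
        rwa [Ideal.Quotient.eq_zero_iff_mem] at h0
      rcases (WedgeBi.mem_wedgeIdeal_iff 1).mp h1 with ⟨h2, -⟩
      rw [map_one] at h2
      exact one_ne_zero h2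
    · ext q
      constructor
      · rintro ⟨p, hmk, hdeg, -⟩
        refine ⟨MvPolynomial.coeff 0 p, ?_⟩
        rw [← hmk]
        conv_lhs => rw [WedgeBi.eq_C_zero p (Nat.le_zero.mp hdeg),
          show (C (MvPolynomial.coeff 0 p) : R2) = MvPolynomial.coeff 0 p • (1:R2) by
            rw [MvPolynomial.smul_eq_C_mul, mul_one]]
        rw [WedgeBi.mk_smul]
      · rintro ⟨a, rfl⟩
        refine ⟨C a, ?_, le_of_eq (MvPolynomial.totalDegree_C a),
          fun r hr => absurd hr (Nat.not_lt_zero _)⟩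
        rw [show (C a : R2) = a • (1:R2) by rw [MvPolynomial.smul_eq_C_mul, mul_one],
          WedgeBi.mk_smul]
  · -- degree n ≥ 1
    intro n hn
    obtain ⟨P1, hP1d, hP1o, hP1e, hP1J⟩ := WedgeAux.exists_orth w1 hi1 hw1 hp1 n hn 1 0
    obtain ⟨Q1, hQ1d, hQ1o, hQ1e, hQ1J⟩ := WedgeAux.exists_orth w2 hi2 hw2 hp2 n hn 1 0
    obtain ⟨P2, hP2d, hP2o, hP2e, hP2J⟩ := WedgeAux.exists_orth w1 hi1 hw1 hp1 n hn 0 1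
    obtain ⟨Q2, hQ2d, hQ2o, hQ2e, hQ2J⟩ := WedgeAux.exists_orth w2 hi2 hw2 hp2 n hn 0 (-1)
    set pu : R2 := WedgeBi.emb 0 P1 + WedgeBi.emb 1 Q1 - 1 with hpu
    set pv : R2 := WedgeBi.emb 0 P2 + WedgeBi.emb 1 Q2 with hpv
    have hres1u : WedgeBi.res1 pu = P1 := by
      rw [hpu, map_sub, map_add, WedgeBi.res1_emb0, WedgeBi.res1_emb1, hQ1e,
        Polynomial.C_1, map_one]
      ring
    have hres2u : WedgeBi.res2 pu = Q1 := by
      rw [hpu, map_sub, map_add, WedgeBi.res2_emb0, WedgeBi.res2_emb1, hP1e,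
        Polynomial.C_1, map_one]
      ring
    have hres1v : WedgeBi.res1 pv = P2 := by
      rw [hpv, map_add, WedgeBi.res1_emb0, WedgeBi.res1_emb1, hQ2e, Polynomial.C_0, add_zero]
    have hres2v : WedgeBi.res2 pv = Q2 := by
      rw [hpv, map_add, WedgeBi.res2_emb0, WedgeBi.res2_emb1, hP2e, Polynomial.C_0, zero_add]
    have hdu : pu.totalDegree ≤ n := by
      rw [hpu, sub_eq_add_neg]
      refine (MvPolynomial.totalDegree_add _ _).trans (max_le ?_ ?_)
      · refine (MvPolynomial.totalDegree_add _ _).trans (max_le ?_ ?_)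
        · exact (WedgeBi.totalDegree_emb_le _ _).trans (WedgeBi.natdeg_le hP1d)
        · exact (WedgeBi.totalDegree_emb_le _ _).trans (WedgeBi.natdeg_le hQ1d)
      · rw [MvPolynomial.totalDegree_neg]
        simp
    have hdv : pv.totalDegree ≤ n := by
      rw [hpv]
      refine (MvPolynomial.totalDegree_add _ _).trans (max_le ?_ ?_)
      · exact (WedgeBi.totalDegree_emb_le _ _).trans (WedgeBi.natdeg_le hP2d)
      · exact (WedgeBi.totalDegree_emb_le _ _).trans (WedgeBi.natdeg_le hQ2d)
    -- properties of linear combinations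
    have horth1 : ∀ a b : ℝ, ∀ i, 1 ≤ i → i < n →
        WedgeAux.J w1 hi1 ((a • P1 + b • P2) * (Polynomial.X^i - 1)) = 0 := by
      intro a b i h1 h2
      rw [add_mul, smul_mul_assoc, smul_mul_assoc, map_add, _root_.map_smul, _root_.map_smul,
        hP1o i h1 h2, hP2o i h1 h2]
      simp
    have horth2 : ∀ a b : ℝ, ∀ i, 1 ≤ i → i < n →
        WedgeAux.J w2 hi2 ((a • Q1 + b • Q2) * (Polynomial.X^i - 1)) = 0 := by
      intro a b i h1 h2
      rw [add_mul, smul_mul_assoc, smul_mul_assoc, map_add, _root_.map_smul, _root_.map_smul,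
        hQ1o i h1 h2, hQ2o i h1 h2]
      simp
    have heval1 : ∀ a b : ℝ, (a • P1 + b • P2).eval 1 = a := by
      intro a b
      rw [Polynomial.eval_add, Polynomial.eval_smul, Polynomial.eval_smul, hP1e, hP2e]
      simp
    have heval2 : ∀ a b : ℝ, (a • Q1 + b • Q2).eval 1 = a := by
      intro a b
      rw [Polynomial.eval_add, Polynomial.eval_smul, Polynomial.eval_smul, hQ1e, hQ2e]
      simp
    have hJ1c : ∀ a b : ℝ, WedgeAux.J w1 hi1 (a • P1 + b • P2) = b := by
      intro a b
      rw [map_add, _root_.map_smul, _root_.map_smul, hP1J, hP2J]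
      simp
    have hJ2c : ∀ a b : ℝ, WedgeAux.J w2 hi2 (a • Q1 + b • Q2) = -b := by
      intro a b
      rw [map_add, _root_.map_smul, _root_.map_smul, hQ1J, hQ2J]
      simp
    have hdeg1 : ∀ a b : ℝ, (a • P1 + b • P2).degree < ((n+1 : ℕ) : WithBot ℕ) :=
      fun a b => (Polynomial.degree_add_le _ _).trans_lt
        (max_lt ((Polynomial.degree_smul_le _ _).trans_lt hP1d)
          ((Polynomial.degree_smul_le _ _).trans_lt hP2d))
    have hdeg2 : ∀ a b : ℝ, (a • Q1 + b • Q2).degree < ((n+1 : ℕ) : WithBot ℕ) :=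
      fun a b => (Polynomial.degree_add_le _ _).trans_lt
        (max_lt ((Polynomial.degree_smul_le _ _).trans_lt hQ1d)
          ((Polynomial.degree_smul_le _ _).trans_lt hQ2d))
    have hcomb1 : ∀ a b : ℝ, WedgeBi.res1 (a • pu + b • pv) = a • P1 + b • P2 := by
      intro a b
      rw [map_add, _root_.map_smul, _root_.map_smul, hres1u, hres1v]
    have hcomb2 : ∀ a b : ℝ, WedgeBi.res2 (a • pu + b • pv) = a • Q1 + b • Q2 := by
      intro a b
      rw [map_add, _root_.map_smul, _root_.map_smul, hres2u, hres2v]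
    -- membership of combinations
    have hmem : ∀ a b : ℝ,
        (a • Ideal.Quotient.mk wedgeIdeal pu + b • Ideal.Quotient.mk wedgeIdeal pv)
          ∈ wedgeOP w1 w2 n := by
      intro a b
      refine ⟨a • pu + b • pv, ?_, ?_, ?_⟩
      · rw [map_add, WedgeBi.mk_smul, WedgeBi.mk_smul]
      · refine (MvPolynomial.totalDegree_add _ _).trans (max_le ?_ ?_)
        · exact (MvPolynomial.totalDegree_smul_le _ _).trans hdu
        · exact (MvPolynomial.totalDegree_smul_le _ _).trans hdv
      · intro r hr
        rw [WedgeBi.wedgeForm_eq w1 w2 hi1 hi2, hcomb1, hcomb2]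
        have hAdeg : (WedgeBi.res1 r).natDegree < n :=
          lt_of_le_of_lt (WedgeBi.natDegree_res1_le r) hr
        have hBdeg : (WedgeBi.res2 r).natDegree < n :=
          lt_of_le_of_lt (WedgeBi.natDegree_res2_le r) hr
        rw [WedgeAux.J_mul_eval w1 hi1 n _ _ (horth1 a b) hAdeg,
          WedgeAux.J_mul_eval w2 hi2 n _ _ (horth2 a b) hBdeg,
          hJ1c, hJ2c]
        have hAB : (WedgeBi.res1 r).eval 1 = (WedgeBi.res2 r).eval 1 := by
          rw [WedgeBi.res1_eval, WedgeBi.res2_eval]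
        rw [hAB]
        ring
    refine ⟨Ideal.Quotient.mk wedgeIdeal pu, Ideal.Quotient.mk wedgeIdeal pv, ?_, ?_⟩
    · rw [LinearIndependent.pair_iff]
      intro s t hst
      have h0 : Ideal.Quotient.mk wedgeIdeal (s • pu + t • pv) = 0 := by
        rw [map_add, WedgeBi.mk_smul, WedgeBi.mk_smul, hst]
      rw [Ideal.Quotient.eq_zero_iff_mem, WedgeBi.mem_wedgeIdeal_iff] at h0
      obtain ⟨hz1, -⟩ := h0
      rw [hcomb1] at hz1
      have he1 : s = 0 := by
        have := heval1 s t
        rw [hz1] at this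
        simpa using this.symm
      have hJ1 : t = 0 := by
        have := hJ1c s t
        rw [hz1] at this
        simpa using this.symm
      exact ⟨he1, hJ1⟩
    · ext q
      constructor
      · rintro ⟨p, hmk, hdeg, hor⟩
        set P := WedgeBi.res1 p with hP
        set Q := WedgeBi.res2 p with hQ
        have hkey1 : ∀ i : ℕ, i < n →
            WedgeAux.J w1 hi1 (P * Polynomial.X ^ i) + WedgeAux.J w2 hi2 Q = 0 := by
          intro i hi'
          have hdr : (WedgeBi.emb 0 (Polynomial.X ^ i) : R2).totalDegree < n :=
            lt_of_le_of_lt ((WedgeBi.totalDegree_emb_le _ _).trans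
              (le_of_eq (Polynomial.natDegree_X_pow i))) hi'
          have hh := hor _ hdr
          rw [WedgeBi.wedgeForm_eq w1 w2 hi1 hi2, WedgeBi.res1_emb0, WedgeBi.res2_emb0] at hh
          simpa [Polynomial.eval_pow] using hh
        have hkey2 : ∀ j : ℕ, j < n →
            WedgeAux.J w1 hi1 P + WedgeAux.J w2 hi2 (Q * Polynomial.X ^ j) = 0 := by
          intro j hj'
          have hdr : (WedgeBi.emb 1 (Polynomial.X ^ j) : R2).totalDegree < n :=
            lt_of_le_of_lt ((WedgeBi.totalDegree_emb_le _ _).trans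
              (le_of_eq (Polynomial.natDegree_X_pow j))) hj'
          have hh := hor _ hdr
          rw [WedgeBi.wedgeForm_eq w1 w2 hi1 hi2, WedgeBi.res2_emb1, WedgeBi.res1_emb1] at hh
          simpa [Polynomial.eval_pow] using hh
        have hsum : WedgeAux.J w1 hi1 P + WedgeAux.J w2 hi2 Q = 0 := by
          have := hkey1 0 hn
          simpa using this
        have horthP : ∀ i, 1 ≤ i → i < n →
            WedgeAux.J w1 hi1 (P * (Polynomial.X^i - 1)) = 0 := by
          intro i h1 h2
          have ha := hkey1 i h2
          have hmulsub : WedgeAux.J w1 hi1 (P * (Polynomial.X ^ i - 1))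
              = WedgeAux.J w1 hi1 (P * Polynomial.X ^ i) - WedgeAux.J w1 hi1 P := by
            rw [mul_sub, mul_one, map_sub]
          rw [hmulsub]
          linarith [hsum]
        have horthQ : ∀ j, 1 ≤ j → j < n →
            WedgeAux.J w2 hi2 (Q * (Polynomial.X^j - 1)) = 0 := by
          intro j h1 h2
          have ha := hkey2 j h2
          have hmulsub : WedgeAux.J w2 hi2 (Q * (Polynomial.X ^ j - 1))
              = WedgeAux.J w2 hi2 (Q * Polynomial.X ^ j) - WedgeAux.J w2 hi2 Q := by
            rw [mul_sub, mul_one, map_sub]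
          rw [hmulsub]
          linarith [hsum]
        set a := P.eval 1 with ha'
        set b := WedgeAux.J w1 hi1 P with hb'
        have hQe : Q.eval 1 = a := by
          rw [hQ, ha', hP, WedgeBi.res1_eval, WedgeBi.res2_eval]
        have hQJ : WedgeAux.J w2 hi2 Q = -b := by
          rw [hb']
          linarith [hsum]
        have hPdeg : P.degree < ((n+1 : ℕ) : WithBot ℕ) :=
          WedgeBi.deg_lt ((WedgeBi.natDegree_res1_le p).trans hdeg)
        have hQdeg : Q.degree < ((n+1 : ℕ) : WithBot ℕ) :=
          WedgeBi.deg_lt ((WedgeBi.natDegree_res2_le p).trans hdeg)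
        have hPuniq : P = a • P1 + b • P2 :=
          WedgeAux.orth_unique w1 hi1 hw1 hp1 n hPdeg (hdeg1 a b) horthP (horth1 a b)
            (by rw [heval1]) (by rw [hJ1c])
        have hQuniq : Q = a • Q1 + b • Q2 :=
          WedgeAux.orth_unique w2 hi2 hw2 hp2 n hQdeg (hdeg2 a b) horthQ (horth2 a b)
            (by rw [heval2, hQe]) (by rw [hJ2c, hQJ])
        refine ⟨a, b, ?_⟩
        rw [← hmk]
        have hequiv : Ideal.Quotient.mk wedgeIdeal p
            = Ideal.Quotient.mk wedgeIdeal (a • pu + b • pv) := by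
          rw [Ideal.Quotient.eq, WedgeBi.mem_wedgeIdeal_iff]
          constructor
          · rw [map_sub, hcomb1, ← hP, hPuniq, sub_self]
          · rw [map_sub, hcomb2, ← hQ, hQuniq, sub_self]
        rw [hequiv, map_add, WedgeBi.mk_smul, WedgeBi.mk_smul]
      · rintro ⟨a, b, rfl⟩
        exact hmem a b

end
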